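/- Any deterministic one-way communication protocol in which Alice holds the prefix M[0..t−1] of the mask, Bob holds the suffix and the rank r, and Bob outputs j(M, r), must communicate at least ⌈log₂ min(t, N−t)⌉ bits. Formally: if a function c from Alice's inputs to transcripts, together with a function from (transcript, Bob's input) to outputs, computes rank-select correctly, and Bob's input is fixed to the all-ones suffix with r = t−1, then the transcript set has at least min(t, N−t) elements. -/

import Mathlib

/-- Totalized rank-select: the position of the r-th set bit of M, or the sentinel N. -/
def rankSelect (N : ℕ) (M : Fin N → Bool) (r : ℕ) : ℕ :=
  ((((List.finRange N).filter fun i => M i)).map Fin.val).getD r N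

lemma key (N t w : ℕ) (ht1 : 1 ≤ t) (ht2 : t ≤ N - 1) (hN : 2 ≤ N)
    (h1 : 2 * t ≤ w + N) (h2 : w ≤ t - 1) :
    rankSelect N (fun i : Fin N => decide (i.val < w ∨ t ≤ i.val)) (t - 1)
      = 2 * t - w - 1 := by
  unfold rankSelect
  have hmap : (((List.finRange N).filter fun i : Fin N => decide (i.val < w ∨ t ≤ i.val)).map Fin.val)
      = (List.range N).filter fun n => decide (n < w ∨ t ≤ n) := by
    have hfr : (List.finRange N).map Fin.val = List.range N :=
      List.ext_getElem (by simp) (by simp)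
    rw [← hfr, List.filter_map]
    rfl
  rw [hmap]
  have e1 : List.range' 0 w ++ List.range' w (t - w) = List.range' 0 t := by
    have h := List.range'_append_1 (s := 0) (m := w) (n := t - w)
    simpa [show w + (t - w) = t from by omega] using h
  have e2 : List.range' 0 t ++ List.range' t (N - t) = List.range' 0 N := by
    have h := List.range'_append_1 (s := 0) (m := t) (n := N - t)
    simpa [show t + (N - t) = N from by omega] using h
  have hsplit : List.range N
      = List.range' 0 w ++ List.range' w (t - w) ++ List.range' t (N - t) := by
    rw [List.range_eq_range', ← e2, ← e1]
  have hf1 : (List.range' 0 w).filter (fun n => decide (n < w ∨ t ≤ n)) = List.range' 0 w := by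
    rw [List.filter_eq_self]
    intro a ha
    simp only [List.mem_range'] at ha
    simp; omega
  have hf2 : (List.range' w (t - w)).filter (fun n => decide (n < w ∨ t ≤ n)) = [] := by
    rw [List.filter_eq_nil_iff]
    intro a ha
    simp only [List.mem_range'] at ha
    simp; omega
  have hf3 : (List.range' t (N - t)).filter (fun n => decide (n < w ∨ t ≤ n)) = List.range' t (N - t) := by
    rw [List.filter_eq_self]
    intro a ha
    simp only [List.mem_range'] at ha
    simp; omega
  rw [hsplit, List.filter_append, List.filter_append, hf1, hf2, hf3, List.append_nil]
  have hlt : t - 1 < (List.range' 0 w ++ List.range' t (N - t)).length := by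
    simp [List.length_append, List.length_range']; omega
  rw [List.getD_eq_getElem _ _ hlt, List.getElem_append_right (by simp [List.length_range']; omega)]
  rw [List.getElem_range']
  simp [List.length_range']
  omega

/-- Rank-select cut lower bound. Any deterministic one-way protocol in which
Alice computes a transcript from the mask prefix M[0..t−1] and Bob outputs j(M, r) from
the transcript and his input (fixed here to the all-ones suffix with rank r = t−1) must
have at least min(t, N−t) distinct transcripts, i.e. communicate ⌈log₂ min(t,N−t)⌉ bits.
Correctness is required on the canonical family M^(w) (prefix of weight w, all-ones
suffix) for w ∈ S_t, whose rank-(t−1) select value is 2t − w − 1. -/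
theorem stmt_5 (N t : ℕ) (hN : 2 ≤ N) (ht1 : 1 ≤ t) (ht2 : t ≤ N - 1)
    (T : Type) [Fintype T]
    (alice : (Fin t → Bool) → T) (bob : T → ℕ)
    (hcorrect : ∀ w : ℕ, 2 * t ≤ w + N → w ≤ t - 1 →
      bob (alice (fun i : Fin t => decide (i.val < w)))
        = rankSelect N (fun i : Fin N => decide (i.val < w ∨ t ≤ i.val)) (t - 1)) :
    min t (N - t) ≤ Fintype.card T := by
  classical
  have hcard : (Finset.Icc (2 * t - N) (t - 1)).card = min t (N - t) := by
    rw [Nat.card_Icc]; omega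
  have hinj : Set.InjOn (fun w : ℕ => alice (fun i : Fin t => decide (i.val < w)))
      (Finset.Icc (2 * t - N) (t - 1)) := by
    intro w hw w' hw' heq
    simp only [Finset.coe_Icc, Set.mem_Icc] at hw hw'
    have hb : bob (alice (fun i : Fin t => decide (i.val < w)))
        = bob (alice (fun i : Fin t => decide (i.val < w'))) := by simp only at heq; rw [heq]
    rw [hcorrect w (by omega) hw.2, hcorrect w' (by omega) hw'.2,
        key N t w ht1 ht2 hN (by omega) hw.2,
        key N t w' ht1 ht2 hN (by omega) hw'.2] at hb
    omega
  calc min t (N - t) = (Finset.Icc (2 * t - N) (t - 1)).card := hcard.symm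
    _ = ((Finset.Icc (2 * t - N) (t - 1)).image
          (fun w : ℕ => alice (fun i : Fin t => decide (i.val < w)))).card :=
        (Finset.card_image_of_injOn hinj).symm
    _ ≤ Fintype.card T := Finset.card_le_univ _
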